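/- Let Λ be a k-graph. Define C_r(Λ) to be the free abelian group on Q_r(Λ) and ∂_r : C_r(Λ) → C_{r−1}(Λ) by ∂_r(λ) = Σ_{ℓ=0}^{1} Σ_{i=1}^{r} (−1)^{i+ℓ} F_i^ℓ(λ) for λ ∈ Q_r(Λ). Then ∂_r ∘ ∂_{r+1} = 0 for all r ≥ 1, so (C_*(Λ), ∂_*) is a chain complex. -/

import Mathlib

namespace KGH

/-- A `k`-graph: a (small, nonempty) category with a degree functor `d : Λ → ℕ^k`
satisfying the unique factorisation property.  Composition `comp f g` is the paper's
`f g`, defined when `s(f) = r(g)`, i.e. `dom f = cod g`. -/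
structure KGraph (k : ℕ) where
  Obj : Type
  Mor : Type
  dom : Mor → Obj
  cod : Mor → Obj
  idm : Obj → Mor
  comp : Mor → Mor → Mor
  d : Mor → Fin k → ℕ
  nonempty : Nonempty Obj
  dom_idm : ∀ o, dom (idm o) = o
  cod_idm : ∀ o, cod (idm o) = o
  d_idm : ∀ o, d (idm o) = 0
  dom_comp : ∀ f g, dom f = cod g → dom (comp f g) = dom g
  cod_comp : ∀ f g, dom f = cod g → cod (comp f g) = cod f
  d_comp : ∀ f g, dom f = cod g → d (comp f g) = d f + d g
  idm_comp : ∀ f, comp (idm (cod f)) f = f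
  comp_idm : ∀ f, comp f (idm (dom f)) = f
  comp_assoc : ∀ f g h, dom f = cod g → dom g = cod h →
      comp (comp f g) h = comp f (comp g h)
  factor : ∀ f (m n : Fin k → ℕ), d f = m + n →
      ∃! p : Mor × Mor, dom p.1 = cod p.2 ∧ d p.1 = m ∧ d p.2 = n ∧ comp p.1 p.2 = f

namespace KGraph

variable {k : ℕ}

/-- the total degree `|λ|` of a morphism. -/
def deg (Λ : KGraph k) (f : Λ.Mor) : ℕ := ∑ i, Λ.d f i

/-- split `f` as `f = p.1 p.2` with `d p.1 = m` (junk value if `m ≰ d f`). -/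
noncomputable def splitAt (Λ : KGraph k) (f : Λ.Mor) (m : Fin k → ℕ) : Λ.Mor × Λ.Mor :=
  if h : Λ.d f = m + (Λ.d f - m) then Classical.choose (Λ.factor f m (Λ.d f - m) h)
  else (f, f)

/-- the factorisation segment `λ(m,n)`. -/
noncomputable def seg (Λ : KGraph k) (f : Λ.Mor) (m n : Fin k → ℕ) : Λ.Mor :=
  (Λ.splitAt (Λ.splitAt f m).2 (n - m)).1

/-- the (sorted) list of coordinates in which `f` has nonzero degree. -/
noncomputable def suppList (Λ : KGraph k) (f : Λ.Mor) : List (Fin k) :=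
  (Finset.univ.filter fun i => Λ.d f i ≠ 0).sort (· ≤ ·)

/-- the face maps `F_j^ℓ` (`j` is 1-based; `ℓ = false` is `F_j^0`, `ℓ = true` is `F_j^1`). -/
noncomputable def face (Λ : KGraph k) (j : ℕ) (ℓ : Bool) (f : Λ.Mor) : Λ.Mor :=
  match (Λ.suppList f)[j-1]? with
  | none => f
  | some i =>
    if ℓ then Λ.seg f (Pi.single i 1) (Λ.d f)
    else Λ.seg f 0 (Λ.d f - Pi.single i 1)

/-- `Q_r(Λ)`, the set of `r`-cubes: morphisms of degree `≤ 1_k` with `|d λ| = r`. -/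
def QSet (Λ : KGraph k) (r : ℕ) : Set Λ.Mor :=
  {f | (∀ i, Λ.d f i ≤ 1) ∧ Λ.deg f = r}

/-- the (total) group of chains. -/
abbrev Chain (Λ : KGraph k) : Type := Λ.Mor →₀ ℤ

/-- the boundary of a generator: `∂ λ = Σ_{ℓ,i} (-1)^{i+ℓ} F_i^ℓ(λ)`. -/
noncomputable def bdFun (Λ : KGraph k) (f : Λ.Mor) : Λ.Chain :=
  ∑ j ∈ Finset.range (Λ.deg f),
    ((-1 : ℤ) ^ (j + 1) • Finsupp.single (Λ.face (j+1) false f) (1 : ℤ)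
      + (-1 : ℤ) ^ j • Finsupp.single (Λ.face (j+1) true f) (1 : ℤ))

/-- the boundary map `∂` on chains. -/
noncomputable def bd (Λ : KGraph k) : Λ.Chain →ₗ[ℤ] Λ.Chain :=
  Finsupp.lift Λ.Chain ℤ Λ.Mor Λ.bdFun

/-- `C_r(Λ) = ℤ Q_r(Λ)`, as the submodule of chains supported on `Q_r(Λ)`. -/
noncomputable def CS (Λ : KGraph k) (r : ℕ) : Submodule ℤ Λ.Chain :=
  Finsupp.supported ℤ ℤ (Λ.QSet r)

/-- the `r`-cycles `ker ∂_r`. -/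
noncomputable def cycles (Λ : KGraph k) (r : ℕ) : Submodule ℤ Λ.Chain :=
  Λ.CS r ⊓ LinearMap.ker Λ.bd

/-- the `r`-boundaries `im ∂_{r+1}`. -/
noncomputable def bdries (Λ : KGraph k) (r : ℕ) : Submodule ℤ Λ.Chain :=
  (Λ.CS (r+1)).map Λ.bd

/-- the homology `H_r(Λ) = ker ∂_r / im ∂_{r+1}`. -/
noncomputable abbrev H (Λ : KGraph k) (r : ℕ) :=
  Λ.cycles r ⧸ ((Λ.bdries r).comap (Λ.cycles r).subtype)

/-- the relation `{(r(λ), s(λ))}` on vertices. -/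
def rel (Λ : KGraph k) : Λ.Obj → Λ.Obj → Prop :=
  fun u v => ∃ f : Λ.Mor, Λ.cod f = u ∧ Λ.dom f = v

/-- connectedness: the equivalence relation generated by `rel` is total. -/
def Connected (Λ : KGraph k) : Prop :=
  ∀ u v : Λ.Obj, Relation.EqvGen Λ.rel u v

/-- the setoid of connected components. -/
def compSetoid (Λ : KGraph k) : Setoid Λ.Obj :=
  ⟨Relation.EqvGen Λ.rel, Relation.EqvGen.is_equivalence _⟩

/-- `s(f, m)` for an orientation `m ∈ {1, -1}`. -/
def sV (Λ : KGraph k) (f : Λ.Mor) (m : ℤ) : Λ.Obj :=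
  if m = 1 then Λ.dom f else Λ.cod f

/-- `r(f, m) = s(f, -m)`. -/
def rV (Λ : KGraph k) (f : Λ.Mor) (m : ℤ) : Λ.Obj := Λ.sV f (-m)

/-- an undirected path: a sequence of edges with orientations whose endpoints match. -/
def IsUPath (Λ : KGraph k) (n : ℕ) (g : Fin n → Λ.Mor) (m : Fin n → ℤ) : Prop :=
  (∀ i, g i ∈ Λ.QSet 1) ∧ (∀ i, m i = 1 ∨ m i = -1) ∧
  ∀ (i : ℕ) (h : i + 1 < n),
    Λ.sV (g ⟨i, Nat.lt_of_succ_lt h⟩) (m ⟨i, Nat.lt_of_succ_lt h⟩) =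
    Λ.rV (g ⟨i+1, h⟩) (m ⟨i+1, h⟩)

/-- the source of an undirected path. -/
def pathSrc (Λ : KGraph k) {n : ℕ} (g : Fin (n+1) → Λ.Mor) (m : Fin (n+1) → ℤ) : Λ.Obj :=
  Λ.sV (g (Fin.last n)) (m (Fin.last n))

/-- the range of an undirected path. -/
def pathRng (Λ : KGraph k) {n : ℕ} (g : Fin (n+1) → Λ.Mor) (m : Fin (n+1) → ℤ) : Λ.Obj :=
  Λ.rV (g 0) (m 0)

/-- the trail `Σᵢ mᵢ gᵢ` of an undirected path. -/
noncomputable def trailOf (Λ : KGraph k) {n : ℕ} (g : Fin n → Λ.Mor) (m : Fin n → ℤ) :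
    Λ.Chain :=
  ∑ i, m i • Finsupp.single (g i) (1 : ℤ)

/-- `h` is a simple closed trail. -/
def IsSimpleClosedTrail (Λ : KGraph k) (h : Λ.Chain) : Prop :=
  ∃ (n : ℕ) (g : Fin (n+1) → Λ.Mor) (m : Fin (n+1) → ℤ),
    Λ.IsUPath (n+1) g m ∧ Λ.pathSrc g m = Λ.pathRng g m ∧
    Function.Injective (fun i => Λ.sV (g i) (m i)) ∧
    h = Λ.trailOf g m

end KGraph

end KGH

namespace KGH.KGraph
variable {k : ℕ} (Λ : KGraph k)

lemma d_eq_add_sub {f : Λ.Mor} {m : Fin k → ℕ} (h : m ≤ Λ.d f) :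
    Λ.d f = m + (Λ.d f - m) := by
  funext i; have h2 : m i ≤ Λ.d f i := h i; simp only [Pi.add_apply, Pi.sub_apply]; omega

lemma splitAt_spec {f : Λ.Mor} {m : Fin k → ℕ} (h : m ≤ Λ.d f) :
    Λ.dom (Λ.splitAt f m).1 = Λ.cod (Λ.splitAt f m).2 ∧
    Λ.d (Λ.splitAt f m).1 = m ∧ Λ.d (Λ.splitAt f m).2 = Λ.d f - m ∧
    Λ.comp (Λ.splitAt f m).1 (Λ.splitAt f m).2 = f := by
  have h' := Λ.d_eq_add_sub h
  rw [splitAt, dif_pos h']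
  exact (Classical.choose_spec (Λ.factor f m (Λ.d f - m) h')).1

lemma splitAt_eq {f a b : Λ.Mor} {m : Fin k → ℕ} (hdom : Λ.dom a = Λ.cod b)
    (hda : Λ.d a = m) (hcomp : Λ.comp a b = f) : Λ.splitAt f m = (a, b) := by
  have hdf : Λ.d f = m + Λ.d b := by rw [← hcomp, Λ.d_comp a b hdom, hda]
  have hm : m ≤ Λ.d f := by
    rw [Pi.le_def]; intro i
    have h2 : Λ.d f i = m i + Λ.d b i := by rw [hdf]; simp
    omega
  have hb : Λ.d b = Λ.d f - m := by
    funext i; have h2 := congrFun hdf i; simp only [Pi.add_apply] at h2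
    simp only [Pi.sub_apply]; omega
  have h' := Λ.d_eq_add_sub hm
  rw [splitAt, dif_pos h']
  have := (Classical.choose_spec (Λ.factor f m (Λ.d f - m) h')).2 (a, b)
    ⟨hdom, hda, hb, hcomp⟩
  exact this.symm

lemma splitAt_zero (f : Λ.Mor) : Λ.splitAt f 0 = (Λ.idm (Λ.cod f), f) :=
  Λ.splitAt_eq (by rw [Λ.dom_idm]) (Λ.d_idm _) (Λ.idm_comp f)

lemma splitAt_top (f : Λ.Mor) : Λ.splitAt f (Λ.d f) = (f, Λ.idm (Λ.dom f)) :=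
  Λ.splitAt_eq (by rw [Λ.cod_idm]) rfl (Λ.comp_idm f)

/-- head of the split -/
noncomputable def hd (f : Λ.Mor) (m : Fin k → ℕ) : Λ.Mor := (Λ.splitAt f m).1
/-- tail of the split -/
noncomputable def tl (f : Λ.Mor) (m : Fin k → ℕ) : Λ.Mor := (Λ.splitAt f m).2

variable {f : Λ.Mor} {m n : Fin k → ℕ}

lemma d_hd (h : m ≤ Λ.d f) : Λ.d (Λ.hd f m) = m := (Λ.splitAt_spec h).2.1
lemma d_tl (h : m ≤ Λ.d f) : Λ.d (Λ.tl f m) = Λ.d f - m := (Λ.splitAt_spec h).2.2.1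
lemma dom_hd (h : m ≤ Λ.d f) : Λ.dom (Λ.hd f m) = Λ.cod (Λ.tl f m) := (Λ.splitAt_spec h).1
lemma comp_hd_tl (h : m ≤ Λ.d f) : Λ.comp (Λ.hd f m) (Λ.tl f m) = f := (Λ.splitAt_spec h).2.2.2

lemma hd_self : Λ.hd f (Λ.d f) = f := by have h := congrArg Prod.fst (Λ.splitAt_top f); exact h

lemma splitAt_add (hmn : m + n ≤ Λ.d f) :
    Λ.splitAt f (m + n) =
      (Λ.comp (Λ.hd f m) (Λ.hd (Λ.tl f m) n), Λ.tl (Λ.tl f m) n) := by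
  have hm : m ≤ Λ.d f := le_trans (by rw [Pi.le_def]; intro i; simp only [Pi.add_apply]; exact Nat.le_add_right _ _) hmn
  have hn : n ≤ Λ.d (Λ.tl f m) := by
    rw [Λ.d_tl hm, Pi.le_def]; intro i
    have h1 : m i + n i ≤ Λ.d f i := by have h2 : (m + n) i ≤ Λ.d f i := hmn i; simpa using h2
    simp only [Pi.sub_apply]; omega
  have h1 := Λ.dom_hd hm
  have h2 := Λ.comp_hd_tl hm
  have h3 := dom_hd Λ hn
  have h4 := comp_hd_tl Λ hn
  have hcod : Λ.cod (Λ.hd (Λ.tl f m) n) = Λ.cod (Λ.tl f m) := by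
    conv_rhs => rw [← h4]
    rw [Λ.cod_comp _ _ h3]
  apply Λ.splitAt_eq (a := Λ.comp (Λ.hd f m) (Λ.hd (Λ.tl f m) n)) (b := Λ.tl (Λ.tl f m) n)
  · rw [Λ.dom_comp _ _ (by rw [hcod, h1]), h3]
  · rw [Λ.d_comp _ _ (by rw [hcod, h1]), Λ.d_hd hm, Λ.d_hd hn]
  · rw [Λ.comp_assoc _ _ _ (by rw [hcod, h1]) h3, h4, h2]

lemma tl_tl (hmn : m + n ≤ Λ.d f) : Λ.tl (Λ.tl f m) n = Λ.tl f (m + n) :=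
  by have h := congrArg Prod.snd (Λ.splitAt_add hmn); exact h.symm

lemma hd_add (hmn : m + n ≤ Λ.d f) :
    Λ.hd f (m + n) = Λ.comp (Λ.hd f m) (Λ.hd (Λ.tl f m) n) := by
  have h := congrArg Prod.fst (Λ.splitAt_add hmn); exact h

lemma splitAt_hd_add (hmn : m + n ≤ Λ.d f) :
    Λ.splitAt (Λ.hd f (m + n)) m = (Λ.hd f m, Λ.hd (Λ.tl f m) n) := by
  have hm : m ≤ Λ.d f := le_trans (by rw [Pi.le_def]; intro i; simp only [Pi.add_apply]; exact Nat.le_add_right _ _) hmn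
  have hn : n ≤ Λ.d (Λ.tl f m) := by
    rw [Λ.d_tl hm, Pi.le_def]; intro i
    have h1 : m i + n i ≤ Λ.d f i := by have h2 : (m + n) i ≤ Λ.d f i := hmn i; simpa using h2
    simp only [Pi.sub_apply]; omega
  have h3 := dom_hd Λ hn
  have h4 := comp_hd_tl Λ hn
  have hcod : Λ.cod (Λ.hd (Λ.tl f m) n) = Λ.cod (Λ.tl f m) := by
    conv_rhs => rw [← h4]; rw [Λ.cod_comp _ _ h3]
  exact Λ.splitAt_eq (by rw [hcod, Λ.dom_hd hm]) (Λ.d_hd hm) (Λ.hd_add hmn).symm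

lemma hd_hd (hmn : m + n ≤ Λ.d f) : Λ.hd (Λ.hd f (m + n)) m = Λ.hd f m := by
  have h := congrArg Prod.fst (Λ.splitAt_hd_add hmn); exact h

lemma tl_hd (hmn : m + n ≤ Λ.d f) : Λ.tl (Λ.hd f (m + n)) m = Λ.hd (Λ.tl f m) n := by
  have h := congrArg Prod.snd (Λ.splitAt_hd_add hmn); exact h


lemma mem_suppList {i : Fin k} : i ∈ Λ.suppList f ↔ Λ.d f i ≠ 0 := by
  rw [suppList, Finset.mem_sort, Finset.mem_filter]
  simp

lemma single_le_of_mem {i : Fin k} (h : i ∈ Λ.suppList f) : Pi.single i 1 ≤ Λ.d f := by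
  rw [Pi.le_def]; intro j
  rcases eq_or_ne j i with rfl | hne
  · rw [Pi.single_eq_same]
    have := (Λ.mem_suppList).mp h; omega
  · rw [Pi.single_eq_of_ne hne]; exact Nat.zero_le _

lemma length_suppList (hc : ∀ i, Λ.d f i ≤ 1) : (Λ.suppList f).length = Λ.deg f := by
  rw [suppList, Finset.length_sort, deg]
  rw [← Finset.sum_filter_ne_zero]
  rw [Finset.sum_congr rfl (fun i hi => ?_), Finset.sum_const, smul_eq_mul, mul_one]
  have h1 := (Finset.mem_filter.mp hi).2
  have h2 := hc i
  omega

lemma face_false_eq {j : ℕ} {i : Fin k} (h : (Λ.suppList f)[j-1]? = some i) :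
    Λ.face j false f = Λ.hd f (Λ.d f - Pi.single i 1) := by
  rw [face, h]
  simp only [Bool.false_eq_true, if_false, seg, splitAt_zero, hd]
  norm_num

lemma face_true_eq {j : ℕ} {i : Fin k} (h : (Λ.suppList f)[j-1]? = some i) :
    Λ.face j true f = Λ.tl f (Pi.single i 1) := by
  have hi : i ∈ Λ.suppList f := by
    have := List.getElem?_eq_some_iff.mp h
    obtain ⟨hlt, hEq⟩ := this
    exact hEq ▸ List.getElem_mem hlt
  have hle := Λ.single_le_of_mem hi
  rw [face, h]
  simp only [if_true]
  show (Λ.splitAt (Λ.splitAt f (Pi.single i 1)).2 (Λ.d f - Pi.single i 1)).1 = _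
  have hdt : Λ.d (Λ.tl f (Pi.single i 1)) = Λ.d f - Pi.single i 1 := Λ.d_tl hle
  have : (Λ.splitAt f (Pi.single i 1)).2 = Λ.tl f (Pi.single i 1) := rfl
  rw [this, ← hdt]
  exact Λ.hd_self

lemma d_face {j : ℕ} {i : Fin k} (h : (Λ.suppList f)[j-1]? = some i) (ℓ : Bool) :
    Λ.d (Λ.face j ℓ f) = Λ.d f - Pi.single i 1 := by
  have hi : i ∈ Λ.suppList f := by
    obtain ⟨hlt, hEq⟩ := List.getElem?_eq_some_iff.mp h
    exact hEq ▸ List.getElem_mem hlt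
  have hle := Λ.single_le_of_mem hi
  cases ℓ
  · rw [Λ.face_false_eq h]
    exact Λ.d_hd (by rw [Pi.le_def]; intro j; simp only [Pi.sub_apply]; omega)
  · rw [Λ.face_true_eq h]
    exact Λ.d_tl hle


lemma filter_face {j : ℕ} {i : Fin k} (hc : ∀ p, Λ.d f p ≤ 1)
    (h : (Λ.suppList f)[j-1]? = some i) (ℓ : Bool) :
    (Finset.univ.filter fun p => Λ.d (Λ.face j ℓ f) p ≠ 0)
      = (Finset.univ.filter fun p => Λ.d f p ≠ 0).erase i := by
  have hi : i ∈ Λ.suppList f := by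
    obtain ⟨hlt, hEq⟩ := List.getElem?_eq_some_iff.mp h
    exact hEq ▸ List.getElem_mem hlt
  have hdi : Λ.d f i ≠ 0 := (Λ.mem_suppList).mp hi
  ext p
  rw [Λ.d_face h ℓ]
  simp only [Finset.mem_filter, Finset.mem_erase, Finset.mem_univ, true_and, Pi.sub_apply]
  rcases eq_or_ne p i with rfl | hne
  · simp only [Pi.single_eq_same]
    have := hc p; omega
  · simp only [Pi.single_eq_of_ne hne, hne]
    omega

lemma suppList_face {j : ℕ} {i : Fin k} (hc : ∀ p, Λ.d f p ≤ 1)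
    (h : (Λ.suppList f)[j-1]? = some i) (ℓ : Bool) :
    Λ.suppList (Λ.face j ℓ f) = (Λ.suppList f).eraseIdx (j-1) := by
  obtain ⟨hlt, hEq⟩ := List.getElem?_eq_some_iff.mp h
  have hnd : (Λ.suppList f).Nodup := Finset.sort_nodup _ _
  have hsorted : (Λ.suppList f).Pairwise (· ≤ ·) := Finset.pairwise_sort _ _
  have hperm : List.Perm (Λ.suppList (Λ.face j ℓ f)) ((Λ.suppList f).eraseIdx (j-1)) := by
    rw [← List.Nodup.erase_getElem hnd _ hlt, hEq]
    rw [suppList, Λ.filter_face hc h ℓ, ← Multiset.coe_eq_coe]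
    rw [Finset.sort_eq, Finset.erase_val]
    conv_rhs => rw [suppList]
    rw [← Finset.sort_eq (α := Fin k) _ (· ≤ ·)]
    exact (Multiset.coe_erase _ _).symm
  exact List.Perm.eq_of_pairwise' (by rw [suppList]; exact Finset.pairwise_sort _ _)
    (hsorted.sublist (List.eraseIdx_sublist _ _)) hperm

lemma face_mem_QSet {r j : ℕ} {i : Fin k} (hf : f ∈ Λ.QSet (r+1))
    (h : (Λ.suppList f)[j-1]? = some i) (ℓ : Bool) : Λ.face j ℓ f ∈ Λ.QSet r := by
  obtain ⟨hc, hdeg⟩ := hf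
  have hi : i ∈ Λ.suppList f := by
    obtain ⟨hlt, hEq⟩ := List.getElem?_eq_some_iff.mp h
    exact hEq ▸ List.getElem_mem hlt
  have hdi : Λ.d f i ≠ 0 := (Λ.mem_suppList).mp hi
  have hd := Λ.d_face h ℓ
  constructor
  · intro p; rw [hd]; have := hc p; simp only [Pi.sub_apply]; omega
  · have hsum : Λ.deg (Λ.face j ℓ f) + ∑ p, Pi.single i 1 p = Λ.deg f := by
      rw [deg, deg, ← Finset.sum_add_distrib]
      refine Finset.sum_congr rfl fun p _ => ?_
      rw [hd]
      rcases eq_or_ne p i with rfl | hne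
      · simp only [Pi.sub_apply, Pi.single_eq_same]; omega
      · simp only [Pi.sub_apply, Pi.single_eq_of_ne hne]; omega
    rw [Finset.sum_pi_single', if_pos (Finset.mem_univ i), hdeg] at hsum
    omega

lemma hd_hd' {m n : Fin k → ℕ} (hnm : n ≤ m) (hm : m ≤ Λ.d f) :
    Λ.hd (Λ.hd f m) n = Λ.hd f n := by
  have e : n + (m - n) = m := by
    funext x; have h1 : n x ≤ m x := hnm x
    simp only [Pi.add_apply, Pi.sub_apply]; omega
  conv_lhs => rw [← e]
  exact Λ.hd_hd (by rw [e]; exact hm)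

lemma tl_hd' {m M : Fin k → ℕ} (hm : m ≤ M) (hM : M ≤ Λ.d f) :
    Λ.tl (Λ.hd f M) m = Λ.hd (Λ.tl f m) (M - m) := by
  have e : m + (M - m) = M := by
    funext x; have h1 : m x ≤ M x := hm x
    simp only [Pi.add_apply, Pi.sub_apply]; omega
  conv_lhs => rw [← e]
  exact Λ.tl_hd (by rw [e]; exact hM)

lemma tl_tl' {m n : Fin k → ℕ} (h : m + n ≤ Λ.d f) :
    Λ.tl (Λ.tl f m) n = Λ.tl (Λ.tl f n) m := by
  rw [Λ.tl_tl h, Λ.tl_tl (by rwa [add_comm])]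
  rw [add_comm]

lemma faces_comm {a b : ℕ} (hc : ∀ p, Λ.d f p ≤ 1) (ha : 1 ≤ a) (hab : a < b)
    (hb : b ≤ (Λ.suppList f).length) (ℓ m : Bool) :
    Λ.face a ℓ (Λ.face b m f) = Λ.face (b-1) m (Λ.face a ℓ f) := by
  have hblt : b - 1 < (Λ.suppList f).length := by omega
  have halt : a - 1 < (Λ.suppList f).length := by omega
  have ha' : (Λ.suppList f)[a-1]? = some (Λ.suppList f)[a-1] :=
    List.getElem?_eq_getElem halt
  have hb' : (Λ.suppList f)[b-1]? = some (Λ.suppList f)[b-1] :=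
    List.getElem?_eq_getElem hblt
  set ia := (Λ.suppList f)[a-1] with hia
  set ib := (Λ.suppList f)[b-1] with hib
  have hnd : (Λ.suppList f).Nodup := Finset.sort_nodup _ _
  have hne : ia ≠ ib := fun hEq => by
    have : a - 1 = b - 1 := (List.Nodup.getElem_inj_iff hnd).mp hEq
    omega
  have hda : Λ.d f ia ≠ 0 := (Λ.mem_suppList).mp (hia ▸ List.getElem_mem halt)
  have hdb : Λ.d f ib ≠ 0 := (Λ.mem_suppList).mp (hib ▸ List.getElem_mem hblt)
  have hpq : ∀ x, (Pi.single ia 1 : Fin k → ℕ) x + (Pi.single ib 1 : Fin k → ℕ) x ≤ Λ.d f x := by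
    intro x
    rcases eq_or_ne x ia with rfl | h1
    · rw [Pi.single_eq_same, Pi.single_eq_of_ne hne]; omega
    rcases eq_or_ne x ib with rfl | h2
    · rw [Pi.single_eq_same, Pi.single_eq_of_ne h1]; omega
    · rw [Pi.single_eq_of_ne h1, Pi.single_eq_of_ne h2]; omega
  -- getElem? facts for the composed faces
  have hga : (Λ.suppList (Λ.face b m f))[a-1]? = some ia := by
    rw [Λ.suppList_face hc hb' m, List.getElem?_eraseIdx_of_lt (by omega)]
    exact ha'
  have hhb : (Λ.suppList (Λ.face a ℓ f))[b-1-1]? = some ib := by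
    rw [Λ.suppList_face hc ha' ℓ, List.getElem?_eraseIdx_of_ge (by omega),
      show b - 1 - 1 + 1 = b - 1 by omega]
    exact hb'
  have dg : Λ.d (Λ.face b m f) = Λ.d f - Pi.single ib 1 := Λ.d_face hb' m
  have dh : Λ.d (Λ.face a ℓ f) = Λ.d f - Pi.single ia 1 := Λ.d_face ha' ℓ
  have e4 : Λ.d f - Pi.single ib 1 - Pi.single ia 1
      = Λ.d f - Pi.single ia 1 - Pi.single ib 1 := by
    funext x; simp only [Pi.sub_apply]; omega
  cases ℓ <;> cases m
  · -- ℓ = false, m = false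
    rw [Λ.face_false_eq hga, dg, Λ.face_false_eq hb', Λ.face_false_eq hhb, dh,
      Λ.face_false_eq ha']
    rw [Λ.hd_hd' (by intro x; simp only [Pi.sub_apply]; omega)
        (by intro x; simp only [Pi.sub_apply]; omega),
      Λ.hd_hd' (by intro x; simp only [Pi.sub_apply]; omega)
        (by intro x; simp only [Pi.sub_apply]; omega), e4]
  · -- ℓ = false, m = true
    rw [Λ.face_false_eq hga, dg, Λ.face_true_eq hb', Λ.face_true_eq hhb,
      Λ.face_false_eq ha']
    rw [Λ.tl_hd' (by intro x; have h5 := hpq x; simp only [Pi.sub_apply]; omega)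
        (by intro x; simp only [Pi.sub_apply]; omega)]
    rw [e4]
  · -- ℓ = true, m = false
    rw [Λ.face_true_eq hga, Λ.face_false_eq hb', Λ.face_false_eq hhb, dh,
      Λ.face_true_eq ha']
    rw [Λ.tl_hd' (by intro x; have h5 := hpq x; simp only [Pi.sub_apply]; omega)
        (by intro x; simp only [Pi.sub_apply]; omega)]
    rw [e4]
  · -- ℓ = true, m = true
    rw [Λ.face_true_eq hga, Λ.face_true_eq hb', Λ.face_true_eq hhb, Λ.face_true_eq ha']
    exact Λ.tl_tl' (by rw [Pi.le_def]; intro x; rw [Pi.add_apply]; have h5 := hpq x; omega)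

/-- sign `(-1)^{j+ℓ}` as in the boundary map. -/
def csign (j : ℕ) (ℓ : Bool) : ℤ := if ℓ then (-1)^j else (-1)^(j+1)

lemma csign_succ (j : ℕ) (ℓ : Bool) : csign (j+1) ℓ = -csign j ℓ := by
  cases ℓ <;> simp [csign, pow_succ]

lemma quad_cancel {M : Type*} [AddCommGroup M] [Module ℤ M] (r : ℕ)
    (G : ℕ → Bool → ℕ → Bool → M)
    (hG : ∀ j j' ℓ m, j' < j → j ≤ r → G j ℓ j' m = G j' m (j-1) ℓ) :
    ∑ j ∈ Finset.range (r+1), ∑ j' ∈ Finset.range r, ∑ ℓ : Bool, ∑ m : Bool,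
      (csign j ℓ * csign j' m) • G j ℓ j' m = 0 := by
  have e : ∑ x ∈ (Finset.range (r+1) ×ˢ Finset.range r) ×ˢ
        ((Finset.univ : Finset Bool) ×ˢ (Finset.univ : Finset Bool)),
      (csign x.1.1 x.2.1 * csign x.1.2 x.2.2) • G x.1.1 x.2.1 x.1.2 x.2.2
      = ∑ j ∈ Finset.range (r+1), ∑ j' ∈ Finset.range r, ∑ ℓ : Bool, ∑ m : Bool,
      (csign j ℓ * csign j' m) • G j ℓ j' m := by
    simp only [Finset.sum_product]
  rw [← e]
  refine Finset.sum_involution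
    (fun x _ => if x.1.2 < x.1.1 then ((x.1.2, x.1.1 - 1), (x.2.2, x.2.1))
      else ((x.1.2 + 1, x.1.1), (x.2.2, x.2.1))) ?_ ?_ ?_ ?_
  · rintro ⟨⟨j, j'⟩, ℓ, m⟩ ha
    simp only [Finset.mem_product, Finset.mem_range, Finset.mem_univ, and_true] at ha
    by_cases hlt : j' < j
    · simp only [hlt, if_pos]
      have hje : j = (j - 1) + 1 := by omega
      have hc : csign j' m * csign (j-1) ℓ = -(csign j ℓ * csign j' m) := by
        rw [show csign j ℓ = -csign (j-1) ℓ by conv_lhs => rw [hje, csign_succ]]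
        ring
      show (csign j ℓ * csign j' m) • G j ℓ j' m
          + (csign j' m * csign (j-1) ℓ) • G j' m (j-1) ℓ = 0
      rw [← hG j j' ℓ m hlt (by omega), hc]
      simp [neg_smul]
    · simp only [hlt, if_neg, if_false]
      show (csign j ℓ * csign j' m) • G j ℓ j' m
          + (csign (j'+1) m * csign j ℓ) • G (j'+1) m j ℓ = 0
      have h2 : G (j'+1) m j ℓ = G j ℓ j' m := by
        have := hG (j'+1) j m ℓ (by omega) (by omega)
        simpa using this
      have hc : csign (j'+1) m * csign j ℓ = -(csign j ℓ * csign j' m) := by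
        rw [csign_succ]; ring
      rw [h2, hc]
      simp [neg_smul]
  · rintro ⟨⟨j, j'⟩, ℓ, m⟩ ha _
    by_cases hlt : j' < j <;> simp only [hlt, if_pos, if_neg, if_false] <;>
      intro h <;> simp only [Prod.mk.injEq] at h <;> omega
  · rintro ⟨⟨j, j'⟩, ℓ, m⟩ ha
    simp only [Finset.mem_product, Finset.mem_range, Finset.mem_univ, and_true] at ha ⊢
    by_cases hlt : j' < j <;> simp only [hlt, if_pos, if_neg, if_false] <;>
      exact ⟨by omega, by omega⟩
  · rintro ⟨⟨j, j'⟩, ℓ, m⟩ ha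
    by_cases hlt : j' < j
    · simp only [hlt, if_pos]
      have : ¬ (j - 1 < j') := by omega
      simp only [this, if_neg, if_false]
      have : j - 1 + 1 = j := by omega
      simp [this]
    · simp only [hlt, if_neg, if_false]
      have : j < j' + 1 := by omega
      simp [this]

lemma bd_apply (x : Λ.Chain) : Λ.bd x = x.sum fun g c => c • Λ.bdFun g := by
  rw [bd, Finsupp.lift_apply]

lemma bd_single (g : Λ.Mor) : Λ.bd (Finsupp.single g (1:ℤ)) = Λ.bdFun g := by
  rw [Λ.bd_apply, Finsupp.sum_single_index] <;> simp

lemma bdFun_mem_CS {r : ℕ} (hf : f ∈ Λ.QSet (r+1)) : Λ.bdFun f ∈ Λ.CS r := by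
  rw [bdFun, CS]
  refine Submodule.sum_mem _ fun j hj => ?_
  rw [Finset.mem_range, hf.2] at hj
  have hlen : (Λ.suppList f).length = r + 1 := by rw [Λ.length_suppList hf.1, hf.2]
  have hget : (Λ.suppList f)[j+1-1]? = some (Λ.suppList f)[j+1-1] :=
    List.getElem?_eq_getElem (by omega)
  refine Submodule.add_mem _ (Submodule.smul_mem _ _ ?_) (Submodule.smul_mem _ _ ?_) <;>
    exact Finsupp.single_mem_supported _ _ (Λ.face_mem_QSet hf hget _)

lemma bd_bdFun {r : ℕ} (hf : f ∈ Λ.QSet (r+1)) : Λ.bd (Λ.bdFun f) = 0 := by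
  have hlen : (Λ.suppList f).length = r + 1 := by rw [Λ.length_suppList hf.1, hf.2]
  have hmem : ∀ j (ℓ : Bool), j < r+1 → Λ.face (j+1) ℓ f ∈ Λ.QSet r := fun j ℓ hj =>
    Λ.face_mem_QSet hf (List.getElem?_eq_getElem (by omega)) ℓ
  rw [bdFun, hf.2, map_sum]
  have step : ∀ j ∈ Finset.range (r+1),
      Λ.bd ((-1:ℤ)^(j+1) • Finsupp.single (Λ.face (j+1) false f) 1
        + (-1:ℤ)^j • Finsupp.single (Λ.face (j+1) true f) 1)
      = ∑ j' ∈ Finset.range r, ∑ ℓ : Bool, ∑ m : Bool,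
          (csign j ℓ * csign j' m) •
            Finsupp.single (Λ.face (j'+1) m (Λ.face (j+1) ℓ f)) (1:ℤ) := by
    intro j hj
    rw [Finset.mem_range] at hj
    have h0 := hmem j false hj
    have h1 := hmem j true hj
    rw [map_add, map_smul, map_smul, Λ.bd_single, Λ.bd_single, bdFun, bdFun, h0.2, h1.2,
      Finset.smul_sum, Finset.smul_sum, ← Finset.sum_add_distrib]
    refine Finset.sum_congr rfl fun j' _ => ?_
    simp only [Fintype.sum_bool, csign, if_true, if_false, Bool.false_eq_true,
      smul_add, smul_smul]
    ring_nf
    abel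
  rw [Finset.sum_congr rfl step]
  refine quad_cancel r
    (fun j ℓ j' m => Finsupp.single (Λ.face (j'+1) m (Λ.face (j+1) ℓ f)) (1:ℤ)) ?_
  intro j j' ℓ m hlt hjr
  have hcomm := Λ.faces_comm (a := j'+1) (b := j+1) hf.1 (by omega) (by omega)
    (by omega) m ℓ
  simp only [Nat.add_sub_cancel] at hcomm
  rw [hcomm, show j - 1 + 1 = j by omega]

end KGH.KGraph

open KGH KGraph in
/-- the boundary maps `∂_r` satisfy `∂_r ∘ ∂_{r+1} = 0`, so
`(C_*(Λ), ∂_*)` is a chain complex.  The first conjunct says `∂` maps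
`C_{r+1}(Λ)` into `C_r(Λ)`. -/
theorem statement1 {k : ℕ} (Λ : KGraph k) :
    (∀ r : ℕ, ∀ x ∈ Λ.CS (r + 1), Λ.bd x ∈ Λ.CS r) ∧
    (∀ r : ℕ, 1 ≤ r → ∀ x ∈ Λ.CS (r + 1), Λ.bd (Λ.bd x) = 0) := by
  constructor
  · intro r x hx
    rw [CS] at hx
    rw [Λ.bd_apply, Finsupp.sum]
    exact Submodule.sum_mem _ fun g hg => Submodule.smul_mem _ _
      (Λ.bdFun_mem_CS ((Finsupp.mem_supported _ _).mp hx hg))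
  · intro r _ x hx
    rw [CS] at hx
    rw [Λ.bd_apply x, Finsupp.sum, map_sum]
    refine Finset.sum_eq_zero fun g hg => ?_
    rw [map_smul, Λ.bd_bdFun ((Finsupp.mem_supported _ _).mp hx hg), smul_zero]
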